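/- (Reverse operator Hölder inequality) For any positive semidefinite matrices X and any positive definite matrix Y on a finite-dimensional Hilbert space, and any t > 0, Tr(XY) ≥ (Tr X^{1/(1+t)})^{1+t} · (Tr Y^{-1/t})^{-t}. -/

import Mathlib

open Matrix
open scoped ComplexOrder Kronecker

noncomputable def mpow {n : Type*} [Fintype n] [DecidableEq n]
    (A : Matrix n n ℂ) (s : ℝ) : Matrix n n ℂ :=
  cfc (fun x : ℝ => x ^ s) A

noncomputable def mlog {n : Type*} [Fintype n] [DecidableEq n]
    (A : Matrix n n ℂ) : Matrix n n ℂ :=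
  cfc Real.log A

section Aux

variable {d : ℕ}

private lemma entry_re (W : Matrix (Fin d) (Fin d) ℂ) (v : Fin d → ℝ) (i : Fin d) :
    ((star W * Matrix.diagonal (fun j => (v j : ℂ)) * W) i i).re
      = ∑ j, v j * Complex.normSq (W j i) := by
  rw [Matrix.mul_apply, Complex.re_sum]
  refine Finset.sum_congr rfl fun j _ => ?_
  rw [Matrix.mul_diagonal, Matrix.star_apply]
  simp only [Complex.mul_re, Complex.mul_im, Complex.normSq_apply, RCLike.star_def,
    Complex.conj_re, Complex.conj_im, Complex.ofReal_re, Complex.ofReal_im]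
  ring

private lemma weights_sum {W : Matrix (Fin d) (Fin d) ℂ} (hW : star W * W = 1) (i : Fin d) :
    ∑ j, Complex.normSq (W j i) = 1 := by
  have h : ((star W * W) i i).re = 1 := by rw [hW]; simp
  rw [Matrix.mul_apply, Complex.re_sum] at h
  rw [← h]
  refine Finset.sum_congr rfl fun j _ => ?_
  rw [Matrix.star_apply]
  simp only [Complex.normSq_apply, Complex.mul_re, RCLike.star_def, Complex.conj_re,
    Complex.conj_im]
  ring

private lemma trace_cfc_re (A : Matrix (Fin d) (Fin d) ℂ) (hA : A.IsHermitian) (f : ℝ → ℝ) :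
    (Matrix.trace (cfc f A)).re = ∑ i, f (hA.eigenvalues i) := by
  rw [hA.cfc_eq, Matrix.IsHermitian.cfc, Unitary.conjStarAlgAut_apply, Matrix.trace_mul_cycle,
    hA.eigenvectorUnitary.2.1, Matrix.one_mul, Matrix.trace_diagonal]
  rw [Complex.re_sum]
  refine Finset.sum_congr rfl fun j _ => ?_
  simp [Function.comp]

private lemma jensen {ι : Type*} [Fintype ι] (w x : ι → ℝ) (hw : ∀ i, 0 ≤ w i)
    (hw1 : ∑ i, w i = 1) (hx : ∀ i, 0 ≤ x i) {s : ℝ} (hs0 : 0 < s) (hs1 : s ≤ 1) :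
    ∑ i, x i ^ s * w i ≤ (∑ i, x i * w i) ^ s := by
  have h := Real.arith_mean_le_rpow_mean Finset.univ w (fun i => x i ^ s)
    (fun i _ => hw i) hw1 (fun i _ => Real.rpow_nonneg (hx i) s)
    (p := 1/s) (by rw [le_div_iff₀ hs0]; linarith)
  have hxx : ∀ i : ι, (x i ^ s) ^ (1/s : ℝ) = x i := fun i => by
    rw [← Real.rpow_mul (hx i), mul_one_div_cancel hs0.ne', Real.rpow_one]
  rw [one_div_one_div] at h
  simp_rw [hxx] at h
  calc ∑ i, x i ^ s * w i = ∑ i, w i * x i ^ s := by simp_rw [mul_comm]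
    _ ≤ (∑ i, w i * x i) ^ s := h
    _ = (∑ i, x i * w i) ^ s := by simp_rw [mul_comm]

private lemma entry_cfc_le (X : Matrix (Fin d) (Fin d) ℂ) (hX : X.PosSemidef)
    (U : Matrix (Fin d) (Fin d) ℂ) (hU : star U * U = 1) {s : ℝ} (hs0 : 0 < s) (hs1 : s ≤ 1)
    (i : Fin d) :
    ((star U * mpow X s * U) i i).re ≤ (((star U * X * U) i i).re) ^ s := by
  have hXh := hX.1
  set V : Matrix (Fin d) (Fin d) ℂ := (hXh.eigenvectorUnitary : Matrix (Fin d) (Fin d) ℂ) with hV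
  have hVu : V * star V = 1 := hXh.eigenvectorUnitary.2.2
  set W : Matrix (Fin d) (Fin d) ℂ := star V * U with hWdef
  have hWW : star W * W = 1 := by
    rw [hWdef, StarMul.star_mul, star_star, Matrix.mul_assoc, ← Matrix.mul_assoc V, hVu,
      Matrix.one_mul, hU]
  have key : ∀ (D : Matrix (Fin d) (Fin d) ℂ),
      star U * (V * D * star V) * U = star W * D * W := fun D => by
    rw [hWdef, StarMul.star_mul, star_star]
    simp only [Matrix.mul_assoc]
  have hx := fun j => hX.eigenvalues_nonneg j
  have hmp : mpow X s = V * Matrix.diagonal (fun j => ((hXh.eigenvalues j ^ s : ℝ) : ℂ)) * star V := by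
    simp only [mpow]
    rw [hXh.cfc_eq, Matrix.IsHermitian.cfc]
    rfl
  have hXd : X = V * Matrix.diagonal (fun j => ((hXh.eigenvalues j : ℝ) : ℂ)) * star V := by
    conv_lhs => rw [hXh.spectral_theorem]
    rfl
  rw [hmp, key, entry_re]
  conv_rhs => rw [hXd, key, entry_re]
  exact jensen (fun j => Complex.normSq (W j i)) hXh.eigenvalues
    (fun j => Complex.normSq_nonneg _) (weights_sum hWW i) hx hs0 hs1

private lemma scalar_rh {ι : Type*} [Fintype ι] (a y : ι → ℝ) (ha : ∀ i, 0 ≤ a i)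
    (hy : ∀ i, 0 < y i) {t : ℝ} (ht : 0 < t) :
    (∑ i, a i ^ (1/(1+t) : ℝ)) ^ (1+t) * (∑ i, y i ^ (-(1/t) : ℝ)) ^ (-t) ≤ ∑ i, a i * y i := by
  have ht1 : (0:ℝ) < 1 + t := by linarith
  rcases isEmpty_or_nonempty ι with h | h
  · simp [Real.zero_rpow ht1.ne']
  have huniv : (Finset.univ : Finset ι).Nonempty := Finset.univ_nonempty
  set S := ∑ i, y i ^ (-(1/t) : ℝ) with hS
  have hSpos : 0 < S := Finset.sum_pos (fun i _ => Real.rpow_pos_of_pos (hy i) _) huniv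
  have hpq : Real.HolderConjugate (1+t) ((1+t)/t) := by
    constructor
    · rw [inv_div, inv_one]
      field_simp
    · linarith
    · positivity
  have hH := Real.inner_le_Lp_mul_Lq_of_nonneg (s := Finset.univ)
      (f := fun i => (a i * y i) ^ (1/(1+t) : ℝ)) (g := fun i => y i ^ (-(1/(1+t)) : ℝ)) hpq
      (fun i _ => Real.rpow_nonneg (mul_nonneg (ha i) (hy i).le) _)
      (fun i _ => (Real.rpow_pos_of_pos (hy i) _).le)
  have e1 : ∀ i : ι, (a i * y i) ^ (1/(1+t) : ℝ) * y i ^ (-(1/(1+t)) : ℝ)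
      = a i ^ (1/(1+t) : ℝ) := fun i => by
    rw [Real.mul_rpow (ha i) (hy i).le, mul_assoc, ← Real.rpow_add (hy i), add_neg_cancel,
      Real.rpow_zero, mul_one]
  have e2 : ∀ i : ι, ((a i * y i) ^ (1/(1+t) : ℝ)) ^ (1+t : ℝ) = a i * y i := fun i => by
    rw [← Real.rpow_mul (mul_nonneg (ha i) (hy i).le), one_div_mul_cancel ht1.ne',
      Real.rpow_one]
  have e3 : ∀ i : ι, (y i ^ (-(1/(1+t)) : ℝ)) ^ ((1+t)/t : ℝ) = y i ^ (-(1/t) : ℝ) := fun i => by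
    rw [← Real.rpow_mul (hy i).le]
    congr 1
    field_simp
  simp_rw [e1, e2, e3] at hH
  have h1q : (1 / ((1+t)/t) : ℝ) = t / (1+t) := by rw [one_div_div]
  rw [h1q] at hH
  have hay : (0:ℝ) ≤ ∑ i, a i * y i :=
    Finset.sum_nonneg fun i _ => mul_nonneg (ha i) (hy i).le
  have hL : (0:ℝ) ≤ ∑ i, a i ^ (1/(1+t) : ℝ) :=
    Finset.sum_nonneg fun i _ => Real.rpow_nonneg (ha i) _
  have h2 := Real.rpow_le_rpow hL hH ht1.le
  rw [Real.mul_rpow (Real.rpow_nonneg hay _) (Real.rpow_nonneg hSpos.le _),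
    show ((∑ i, a i * y i) ^ (1/(1+t) : ℝ)) ^ ((1+t) : ℝ) = ∑ i, a i * y i from by
      rw [← Real.rpow_mul hay, one_div_mul_cancel ht1.ne', Real.rpow_one],
    show ((S ^ (t/(1+t) : ℝ)) ^ ((1+t) : ℝ)) = S ^ t from by
      rw [← Real.rpow_mul hSpos.le, div_mul_cancel₀ _ ht1.ne'] ] at h2
  calc (∑ i, a i ^ (1/(1+t) : ℝ)) ^ (1+t) * S ^ (-t)
      ≤ ((∑ i, a i * y i) * S ^ t) * S ^ (-t) :=
        mul_le_mul_of_nonneg_right h2 (Real.rpow_nonneg hSpos.le _)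
    _ = ∑ i, a i * y i := by
        rw [mul_assoc, ← Real.rpow_add hSpos, add_neg_cancel, Real.rpow_zero, mul_one]

end Aux

/-- Reverse operator Hölder inequality: for `X ≥ 0`, `Y > 0` and `t > 0`,
`Tr(XY) ≥ (Tr X^{1/(1+t)})^{1+t} (Tr Y^{-1/t})^{-t}`. -/
theorem reverse_operator_holder {d : ℕ} (X Y : Matrix (Fin d) (Fin d) ℂ) (t : ℝ)
    (hX : X.PosSemidef) (hY : Y.PosDef) (ht : 0 < t) :
    ((Matrix.trace (mpow X (1/(1+t)))).re) ^ (1+t)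
        * ((Matrix.trace (mpow Y (-(1/t)))).re) ^ (-t)
      ≤ (Matrix.trace (X * Y)).re := by
  have ht1 : (0:ℝ) < 1 + t := by linarith
  have hYh : Y.IsHermitian := hY.1
  set U : Matrix (Fin d) (Fin d) ℂ := (hYh.eigenvectorUnitary : Matrix (Fin d) (Fin d) ℂ) with hUdef
  have hU1 : star U * U = 1 := hYh.eigenvectorUnitary.2.1
  have hU2 : U * star U = 1 := hYh.eigenvectorUnitary.2.2
  set y := hYh.eigenvalues with hy
  set b : Fin d → ℝ := fun i => ((star U * X * U) i i).re with hb
  have hbnn : ∀ i, 0 ≤ b i := by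
    intro i
    have hM : (star U * X * U).PosSemidef := by
      have := hX.conjTranspose_mul_mul_same U
      rwa [Matrix.star_eq_conjTranspose]
    have h := hM.re_dotProduct_nonneg (Pi.single i 1)
    simpa [Matrix.mulVec_single, dotProduct, Pi.single_apply, Finset.sum_ite_eq] using h
  -- trace formula for X * Y
  have hYs : Y = U * Matrix.diagonal (fun i => ((y i : ℝ) : ℂ)) * star U := by
    conv_lhs => rw [hYh.spectral_theorem]
    rfl
  have hXY : star U * (X * Y) * U
      = star U * X * U * Matrix.diagonal (fun i => ((y i : ℝ) : ℂ)) := by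
    conv_lhs => rw [hYs]
    simp only [Matrix.mul_assoc, hU1, Matrix.mul_one]
  have htrXY : Matrix.trace (X * Y) = Matrix.trace (star U * (X * Y) * U) := by
    rw [Matrix.trace_mul_cycle, ← Matrix.mul_assoc, hU2, Matrix.one_mul]
  have hF1 : (Matrix.trace (X * Y)).re = ∑ i, b i * y i := by
    rw [htrXY, hXY]
    rw [Matrix.trace]
    rw [Complex.re_sum]
    refine Finset.sum_congr rfl fun i _ => ?_
    rw [Matrix.diag_apply, Matrix.mul_diagonal]
    simp [Complex.mul_re, hb]
  -- trace formula for mpow Y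
  have hF2 : (Matrix.trace (mpow Y (-(1/t)))).re = ∑ i, y i ^ (-(1/t) : ℝ) := by
    simp only [mpow]
    rw [trace_cfc_re Y hYh]
  -- bound trace of mpow X
  have hs0 : (0:ℝ) < 1/(1+t) := by positivity
  have hs1 : (1/(1+t) : ℝ) ≤ 1 := by
    rw [div_le_one ht1]; linarith
  have htrX : Matrix.trace (mpow X (1/(1+t))) = Matrix.trace (star U * mpow X (1/(1+t)) * U) := by
    rw [Matrix.trace_mul_cycle, hU2, Matrix.one_mul]
  have hF3 : (Matrix.trace (mpow X (1/(1+t)))).re ≤ ∑ i, b i ^ (1/(1+t) : ℝ) := by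
    rw [htrX, Matrix.trace, Complex.re_sum]
    exact Finset.sum_le_sum fun i _ => entry_cfc_le X hX U hU1 hs0 hs1 i
  have hF4 : 0 ≤ (Matrix.trace (mpow X (1/(1+t)))).re := by
    simp only [mpow]
    rw [trace_cfc_re X hX.1]
    exact Finset.sum_nonneg fun i _ => Real.rpow_nonneg (hX.eigenvalues_nonneg i) _
  have hynn : (0:ℝ) ≤ ∑ i, y i ^ (-(1/t) : ℝ) :=
    Finset.sum_nonneg fun i _ => (Real.rpow_pos_of_pos (hY.eigenvalues_pos i) _).le
  calc ((Matrix.trace (mpow X (1/(1+t)))).re) ^ (1+t)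
        * ((Matrix.trace (mpow Y (-(1/t)))).re) ^ (-t)
      ≤ (∑ i, b i ^ (1/(1+t) : ℝ)) ^ (1+t) * (∑ i, y i ^ (-(1/t) : ℝ)) ^ (-t) := by
        rw [hF2]
        exact mul_le_mul_of_nonneg_right (Real.rpow_le_rpow hF4 hF3 ht1.le)
          (Real.rpow_nonneg hynn _)
    _ ≤ ∑ i, b i * y i := scalar_rh b y hbnn (fun i => hY.eigenvalues_pos i) ht
    _ = (Matrix.trace (X * Y)).re := hF1.symm
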